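/- Let G be a closed B-invariant subspace of H, let P be the orthogonal projection of H onto H0 ⊕ {0} and Q the orthogonal projection onto G. Then ||P - Q|| < 1 if and only if G = {x ⊕ Xx : x in H0} for some everywhere-defined bounded operator X : H0 -> H1 satisfying A1 X - X A0 - X V X + V* = 0. In this case ||X|| = ||P - Q|| / sqrt(1 - ||P - Q||^2) and ||P - Q|| = ||X|| / sqrt(1 + ||X||^2). -/

import Mathlib

open scoped ComplexInnerProductSpace

noncomputable section

variable {H0 H1 : Type*}
  [NormedAddCommGroup H0] [InnerProductSpace ℂ H0] [CompleteSpace H0]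
  [NormedAddCommGroup H1] [InnerProductSpace ℂ H1] [CompleteSpace H1]

/-- The subspace `H₀ ⊕ {0}` of the Hilbert space `H = H₀ ⊕ H₁` (realized as `WithLp 2 (H0 × H1)`). -/
def firstSummand (H0 H1 : Type*)
    [NormedAddCommGroup H0] [InnerProductSpace ℂ H0]
    [NormedAddCommGroup H1] [InnerProductSpace ℂ H1] :
    Submodule ℂ (WithLp 2 (H0 × H1)) :=
  ((⊤ : Submodule ℂ H0).prod (⊥ : Submodule ℂ H1)).map
    (WithLp.linearEquiv 2 ℂ (H0 × H1)).symm.toLinearMap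

/-- The graph subspace `G(H₀, X) = {x ⊕ X x : x ∈ H₀}` of a bounded operator `X : H₀ → H₁`,
viewed inside the Hilbert space `H = H₀ ⊕ H₁`. -/
def graphSubspace (X : H0 →L[ℂ] H1) : Submodule ℂ (WithLp 2 (H0 × H1)) :=
  (LinearMap.graph X.toLinearMap).map (WithLp.linearEquiv 2 ℂ (H0 × H1)).symm.toLinearMap

/-! ### Auxiliary material -/

/-- The element `a ⊕ b` of `H₀ ⊕ H₁`. -/
private def mk2 (a : H0) (b : H1) : WithLp 2 (H0 × H1) :=
  (WithLp.equiv 2 (H0 × H1)).symm (a, b)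

private lemma mk2_fst (a : H0) (b : H1) : (mk2 a b).fst = a := rfl
private lemma mk2_snd (a : H0) (b : H1) : (mk2 a b).snd = b := rfl

private lemma withlp_ext {u v : WithLp 2 (H0 × H1)} (h1 : u.fst = v.fst)
    (h2 : u.snd = v.snd) : u = v :=
  (WithLp.equiv 2 (H0 × H1)).injective (Prod.ext h1 h2)

private lemma sub_fst (u v : WithLp 2 (H0 × H1)) : (u - v).fst = u.fst - v.fst := rfl
private lemma sub_snd (u v : WithLp 2 (H0 × H1)) : (u - v).snd = u.snd - v.snd := rfl
private lemma add_fst (u v : WithLp 2 (H0 × H1)) : (u + v).fst = u.fst + v.fst := rfl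
private lemma add_snd (u v : WithLp 2 (H0 × H1)) : (u + v).snd = u.snd + v.snd := rfl
private lemma smul_fst (c : ℂ) (u : WithLp 2 (H0 × H1)) : (c • u).fst = c • u.fst := rfl
private lemma smul_snd (c : ℂ) (u : WithLp 2 (H0 × H1)) : (c • u).snd = c • u.snd := rfl

private lemma norm_sq_eq (u : WithLp 2 (H0 × H1)) : ‖u‖ ^ 2 = ‖u.fst‖ ^ 2 + ‖u.snd‖ ^ 2 :=
  WithLp.prod_norm_sq_eq_of_L2 u

private lemma le_of_sq_le_sq' {x y : ℝ} (hx : 0 ≤ x) (hy : 0 ≤ y) (h : x ^ 2 ≤ y ^ 2) :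
    x ≤ y := by nlinarith

private lemma eq_of_sq_eq {x y : ℝ} (hx : 0 ≤ x) (hy : 0 ≤ y) (h : x ^ 2 = y ^ 2) :
    x = y := by nlinarith

private lemma snd_norm_le (v : WithLp 2 (H0 × H1)) : ‖v.snd‖ ≤ ‖v‖ := by
  have h := norm_sq_eq v
  have h1 := norm_nonneg v
  have h2 := norm_nonneg v.fst
  have h3 := norm_nonneg v.snd
  nlinarith

private lemma fst_norm_le (v : WithLp 2 (H0 × H1)) : ‖v.fst‖ ≤ ‖v‖ := by
  have h := norm_sq_eq v
  have h1 := norm_nonneg v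
  have h2 := norm_nonneg v.fst
  have h3 := norm_nonneg v.snd
  nlinarith

private lemma norm_mk2_left (a : H0) : ‖(mk2 a 0 : WithLp 2 (H0 × H1))‖ = ‖a‖ := by
  refine eq_of_sq_eq (norm_nonneg _) (norm_nonneg _) ?_
  rw [norm_sq_eq, mk2_fst, mk2_snd, norm_zero]
  ring

private lemma mem_firstSummand_iff {u : WithLp 2 (H0 × H1)} :
    u ∈ firstSummand H0 H1 ↔ u.snd = 0 := by
  unfold firstSummand
  constructor
  · rintro ⟨⟨a, b⟩, hab, rfl⟩
    have hb : b = 0 := by simpa using hab.2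
    simpa using hb
  · intro h
    exact ⟨(u.fst, u.snd), by simp [Submodule.mem_prod, h], rfl⟩

private lemma mem_graphSubspace_iff {X : H0 →L[ℂ] H1} {u : WithLp 2 (H0 × H1)} :
    u ∈ graphSubspace X ↔ u.snd = X u.fst := by
  unfold graphSubspace
  constructor
  · rintro ⟨⟨a, b⟩, hab, rfl⟩
    exact (LinearMap.mem_graph_iff _ _).mp hab
  · intro h
    exact ⟨(u.fst, u.snd), (LinearMap.mem_graph_iff _ _).mpr h, rfl⟩

private lemma proj_fix {E : Type*} [NormedAddCommGroup E] [InnerProductSpace ℂ E]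
    {R : E →L[ℂ] E} (hR : IsIdempotentElem R) {g : E} (hg : g ∈ LinearMap.range (R : E →ₗ[ℂ] E)) :
    R g = g := by
  obtain ⟨y, rfl⟩ := hg
  calc R (R y) = (R * R) y := rfl
  _ = R y := by rw [hR.eq]

private lemma proj_orth {E : Type*} [NormedAddCommGroup E] [InnerProductSpace ℂ E]
    [CompleteSpace E] {R : E →L[ℂ] E} (hR : IsIdempotentElem R) (hRsa : IsSelfAdjoint R)
    (w : E) {g : E} (hg : g ∈ LinearMap.range (R : E →ₗ[ℂ] E)) : ⟪g, w - R w⟫ = 0 := by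
  obtain ⟨y, rfl⟩ := hg
  have hadj : ContinuousLinearMap.adjoint R = R := hRsa.adjoint_eq
  have h1 : ⟪R y, w - R w⟫ = ⟪y, R (w - R w)⟫ := by
    have h1' := ContinuousLinearMap.adjoint_inner_left R (w - R w) y
    rwa [hadj] at h1'
  have h2 : R (w - R w) = 0 := by
    rw [map_sub]
    have h3 : R (R w) = (R * R) w := rfl
    rw [h3, hR.eq, sub_self]
  exact h1.trans (by rw [h2, inner_zero_right])

private lemma real_key1 {a n t : ℝ} (ha : 0 ≤ a) (hn : 0 ≤ n) (ht : 0 ≤ t)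
    (h : a ≤ t * n) {r : ℝ} (hr : 0 ≤ r) (hr2 : r ^ 2 = n ^ 2 + a ^ 2) :
    a ≤ t / Real.sqrt (1 + t ^ 2) * r := by
  have h1 : 0 < Real.sqrt (1 + t ^ 2) := Real.sqrt_pos.mpr (by positivity)
  rw [div_mul_eq_mul_div, le_div_iff₀ h1]
  refine le_of_sq_le_sq' (by positivity) (by positivity) ?_
  rw [mul_pow, mul_pow, Real.sq_sqrt (by positivity : (0:ℝ) ≤ 1 + t ^ 2), hr2]
  nlinarith

private lemma real_key2 {a n c : ℝ} (ha : 0 ≤ a) (hn : 0 ≤ n) (hc : 0 ≤ c) (hc1 : c < 1)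
    (h : a ≤ c * Real.sqrt (n ^ 2 + a ^ 2)) :
    a ≤ c / Real.sqrt (1 - c ^ 2) * n := by
  have hs : 0 < Real.sqrt (1 - c ^ 2) := Real.sqrt_pos.mpr (by nlinarith)
  have h2 : a ^ 2 ≤ (c * Real.sqrt (n ^ 2 + a ^ 2)) ^ 2 := pow_le_pow_left₀ ha h 2
  rw [mul_pow, Real.sq_sqrt (by positivity : (0:ℝ) ≤ n ^ 2 + a ^ 2)] at h2
  rw [div_mul_eq_mul_div, le_div_iff₀ hs]
  refine le_of_sq_le_sq' (by positivity) (by positivity) ?_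
  rw [mul_pow, mul_pow, Real.sq_sqrt (by nlinarith : (0:ℝ) ≤ 1 - c ^ 2)]
  nlinarith

private lemma real_key3 {c t : ℝ} (hc : 0 ≤ c) (ht : 0 ≤ t) (hc1 : c < 1)
    (h1 : c ≤ t / Real.sqrt (1 + t ^ 2)) (h2 : t ≤ c / Real.sqrt (1 - c ^ 2)) :
    t = c / Real.sqrt (1 - c ^ 2) ∧ c = t / Real.sqrt (1 + t ^ 2) := by
  have hs1 : 0 < Real.sqrt (1 + t ^ 2) := Real.sqrt_pos.mpr (by positivity)
  have hs2 : 0 < Real.sqrt (1 - c ^ 2) := Real.sqrt_pos.mpr (by nlinarith)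
  have hq1 : Real.sqrt (1 + t ^ 2) ^ 2 = 1 + t ^ 2 := Real.sq_sqrt (by positivity)
  have hq2 : Real.sqrt (1 - c ^ 2) ^ 2 = 1 - c ^ 2 := Real.sq_sqrt (by nlinarith)
  have e1 : c * Real.sqrt (1 + t ^ 2) ≤ t := by rwa [← le_div_iff₀ hs1]
  have e2 : t * Real.sqrt (1 - c ^ 2) ≤ c := by rwa [← le_div_iff₀ hs2]
  have q1 : c ^ 2 * (1 + t ^ 2) ≤ t ^ 2 := by nlinarith [mul_nonneg hc hs1.le]
  have q2 : t ^ 2 * (1 - c ^ 2) ≤ c ^ 2 := by nlinarith [mul_nonneg ht hs2.le]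
  have q3 : c ^ 2 * (1 + t ^ 2) = t ^ 2 := by nlinarith
  constructor
  · rw [eq_div_iff hs2.ne']
    refine eq_of_sq_eq (mul_nonneg ht hs2.le) hc ?_
    rw [mul_pow, hq2]
    nlinarith
  · rw [eq_div_iff hs1.ne']
    refine eq_of_sq_eq (mul_nonneg hc hs1.le) ht ?_
    rw [mul_pow, hq1]
    nlinarith

set_option maxHeartbeats 1000000 in
theorem norm_sub_proj_lt_one_iff_graph_of_bounded_riccati_solution
    [TopologicalSpace.SeparableSpace H0] [TopologicalSpace.SeparableSpace H1]
    (A0 : H0 →L[ℂ] H0) (A1 : H1 →L[ℂ] H1) (V : H1 →L[ℂ] H0)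
    (hA0 : IsSelfAdjoint A0) (hA1 : IsSelfAdjoint A1)
    (B : WithLp 2 (H0 × H1) →L[ℂ] WithLp 2 (H0 × H1))
    (hB : ∀ u : WithLp 2 (H0 × H1),
      WithLp.equiv 2 (H0 × H1) (B u) =
        (A0 (WithLp.equiv 2 (H0 × H1) u).1 + V (WithLp.equiv 2 (H0 × H1) u).2,
         ContinuousLinearMap.adjoint V (WithLp.equiv 2 (H0 × H1) u).1
           + A1 (WithLp.equiv 2 (H0 × H1) u).2))
    (G : Submodule ℂ (WithLp 2 (H0 × H1)))
    (hGclosed : IsClosed (G : Set (WithLp 2 (H0 × H1))))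
    (hGinv : ∀ u ∈ G, B u ∈ G)
    (P Q : WithLp 2 (H0 × H1) →L[ℂ] WithLp 2 (H0 × H1))
    (hP : IsIdempotentElem P) (hPsa : IsSelfAdjoint P)
    (hQ : IsIdempotentElem Q) (hQsa : IsSelfAdjoint Q)
    (hPran : LinearMap.range (P : WithLp 2 (H0 × H1) →ₗ[ℂ] WithLp 2 (H0 × H1)) = firstSummand H0 H1)
    (hQran : LinearMap.range (Q : WithLp 2 (H0 × H1) →ₗ[ℂ] WithLp 2 (H0 × H1)) = G) :
    (‖P - Q‖ < 1 ↔
      ∃ X : H0 →L[ℂ] H1,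
        A1.comp X - X.comp A0 - X.comp (V.comp X) + ContinuousLinearMap.adjoint V = 0 ∧
        G = graphSubspace X) ∧
    (∀ X : H0 →L[ℂ] H1,
      A1.comp X - X.comp A0 - X.comp (V.comp X) + ContinuousLinearMap.adjoint V = 0 →
      G = graphSubspace X →
        ‖X‖ = ‖P - Q‖ / Real.sqrt (1 - ‖P - Q‖ ^ 2) ∧
        ‖P - Q‖ = ‖X‖ / Real.sqrt (1 + ‖X‖ ^ 2)) := by
  have hc0 : (0:ℝ) ≤ ‖P - Q‖ := norm_nonneg _
  -- `P` is the coordinate projection onto the first summand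
  have hPap : ∀ u : WithLp 2 (H0 × H1), P u = mk2 u.fst 0 := by
    intro u
    have h2 : (P u).snd = 0 :=
      mem_firstSummand_iff.mp (hPran ▸ LinearMap.mem_range_self (P : WithLp 2 (H0 × H1) →ₗ[ℂ] WithLp 2 (H0 × H1)) u)
    have h1 : u.fst - (P u).fst = 0 := by
      have hz : ∀ z : H0, ⟪z, u.fst - (P u).fst⟫ = 0 := by
        intro z
        have hmem : (mk2 z 0 : WithLp 2 (H0 × H1)) ∈ LinearMap.range (P : WithLp 2 (H0 × H1) →ₗ[ℂ] WithLp 2 (H0 × H1)) := by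
          rw [hPran]; exact mem_firstSummand_iff.mpr rfl
        have h := proj_orth hP hPsa u hmem
        rw [WithLp.prod_inner_apply] at h
        rw [show (mk2 z 0 : WithLp 2 (H0 × H1)).ofLp.1 = z from rfl,
          show (mk2 z 0 : WithLp 2 (H0 × H1)).ofLp.2 = 0 from rfl, inner_zero_left, add_zero] at h
        exact h
      have h4 := hz (u.fst - (P u).fst)
      rwa [inner_self_eq_zero] at h4
    have h1' : (P u).fst = u.fst := (sub_eq_zero.mp h1).symm
    exact withlp_ext (by rw [mk2_fst, h1']) (by rw [mk2_snd, h2])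
  -- facts about Q
  have hQfix : ∀ g ∈ G, Q g = g := by
    intro g hg
    exact proj_fix hQ (by rw [hQran]; exact hg)
  have hQorth : ∀ (w g : WithLp 2 (H0 × H1)), g ∈ G → ⟪g, w - Q w⟫ = 0 := by
    intro w g hg
    exact proj_orth hQ hQsa w (by rw [hQran]; exact hg)
  -- the key quantitative fact
  have key : ∀ X : H0 →L[ℂ] H1, G = graphSubspace X →
      ‖P - Q‖ < 1 ∧ ‖X‖ = ‖P - Q‖ / Real.sqrt (1 - ‖P - Q‖ ^ 2) ∧
        ‖P - Q‖ = ‖X‖ / Real.sqrt (1 + ‖X‖ ^ 2) := by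
    intro X hX
    have ht0 : (0:ℝ) ≤ ‖X‖ := norm_nonneg _
    have hs1 : 0 < Real.sqrt (1 + ‖X‖ ^ 2) := Real.sqrt_pos.mpr (by positivity)
    have hs0 : (0:ℝ) ≤ ‖X‖ / Real.sqrt (1 + ‖X‖ ^ 2) := by positivity
    -- pointwise upper bound on `(P - Q) w`
    have hub : ∀ w : WithLp 2 (H0 × H1),
        ‖(P - Q) w‖ ≤ ‖X‖ / Real.sqrt (1 + ‖X‖ ^ 2) * ‖w‖ := by
      intro w
      set g := Q w with hg
      have hgG : g ∈ G := by rw [← hQran]; exact LinearMap.mem_range_self (Q : WithLp 2 (H0 × H1) →ₗ[ℂ] WithLp 2 (H0 × H1)) w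
      have hgsnd : g.snd = X g.fst := mem_graphSubspace_iff.mp (hX ▸ hgG)
      set h := w - Q w with hh
      have hdecomp : (P - Q) w = P h + (P g - g) := by
        rw [ContinuousLinearMap.sub_apply, hh, map_sub, ← hg]
        abel
      have horth : ⟪P h, P g - g⟫ = 0 := by
        have hadj : ContinuousLinearMap.adjoint P = P := hPsa.adjoint_eq
        have h1 : ⟪P h, P g - g⟫ = ⟪h, P (P g - g)⟫ := by
          have h1' := ContinuousLinearMap.adjoint_inner_left P (P g - g) h
          rwa [hadj] at h1'
        have h2 : P (P g - g) = 0 := by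
          rw [map_sub]
          have h3 : P (P g) = (P * P) g := rfl
          rw [h3, hP.eq, sub_self]
        rw [h1, h2, inner_zero_right]
      have hnorm2 : ‖(P - Q) w‖ ^ 2 = ‖P h‖ ^ 2 + ‖P g - g‖ ^ 2 := by
        rw [hdecomp]
        simp only [pow_two]
        exact norm_add_sq_eq_norm_sq_add_norm_sq_of_inner_eq_zero _ _ horth
      have hgb : ‖P g - g‖ ≤ ‖X‖ / Real.sqrt (1 + ‖X‖ ^ 2) * ‖g‖ := by
        have hfst : (P g - g).fst = 0 := by
          rw [sub_fst, hPap g, mk2_fst, sub_self]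
        have hsnd : (P g - g).snd = -g.snd := by
          rw [sub_snd, hPap g, mk2_snd, zero_sub]
        have hn : ‖P g - g‖ = ‖X g.fst‖ := by
          refine eq_of_sq_eq (norm_nonneg _) (norm_nonneg _) ?_
          rw [norm_sq_eq, hfst, hsnd, norm_zero, norm_neg, hgsnd]
          ring
        rw [hn]
        refine real_key1 (norm_nonneg _) (norm_nonneg _) ht0 (X.le_opNorm g.fst)
          (norm_nonneg g) ?_
        rw [norm_sq_eq, hgsnd]
      have hhb : ‖P h‖ ≤ ‖X‖ / Real.sqrt (1 + ‖X‖ ^ 2) * ‖h‖ := by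
        have hfst : h.fst = -(ContinuousLinearMap.adjoint X h.snd) := by
          have hz : ∀ x : H0, ⟪x, h.fst + ContinuousLinearMap.adjoint X h.snd⟫ = 0 := by
            intro x
            have hmem : (mk2 x (X x) : WithLp 2 (H0 × H1)) ∈ G := by
              rw [hX]; exact mem_graphSubspace_iff.mpr rfl
            have h0 := hQorth w _ hmem
            rw [WithLp.prod_inner_apply] at h0
            rw [show (mk2 x (X x)).ofLp.1 = x from rfl, show (mk2 x (X x)).ofLp.2 = X x from rfl] at h0
            rw [inner_add_right, ContinuousLinearMap.adjoint_inner_right]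
            exact h0
          have h4 := hz (h.fst + ContinuousLinearMap.adjoint X h.snd)
          rw [inner_self_eq_zero] at h4
          exact eq_neg_of_add_eq_zero_left h4
        have hn : ‖P h‖ = ‖ContinuousLinearMap.adjoint X h.snd‖ := by
          rw [hPap h, norm_mk2_left, hfst, norm_neg]
        rw [hn]
        have hle : ‖ContinuousLinearMap.adjoint X h.snd‖ ≤ ‖X‖ * ‖h.snd‖ := by
          have h5 := (ContinuousLinearMap.adjoint X).le_opNorm h.snd
          rwa [(ContinuousLinearMap.adjoint :
            (H0 →L[ℂ] H1) ≃ₗᵢ⋆[ℂ] (H1 →L[ℂ] H0)).norm_map X] at h5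
        refine real_key1 (norm_nonneg _) (norm_nonneg _) ht0 hle (norm_nonneg h) ?_
        rw [norm_sq_eq, hfst, norm_neg]
        ring
      have hw2 : ‖w‖ ^ 2 = ‖g‖ ^ 2 + ‖h‖ ^ 2 := by
        have hw : w = g + h := by rw [hg, hh]; abel
        have hio : ⟪g, h⟫ = 0 := hQorth w g hgG
        calc ‖w‖ ^ 2 = ‖g + h‖ ^ 2 := by rw [← hw]
        _ = ‖g‖ ^ 2 + ‖h‖ ^ 2 := by
          simp only [pow_two]
          exact norm_add_sq_eq_norm_sq_add_norm_sq_of_inner_eq_zero _ _ hio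
      have e1 : ‖P h‖ ^ 2 ≤ (‖X‖ / Real.sqrt (1 + ‖X‖ ^ 2) * ‖h‖) ^ 2 :=
        pow_le_pow_left₀ (norm_nonneg _) hhb 2
      have e2 : ‖P g - g‖ ^ 2 ≤ (‖X‖ / Real.sqrt (1 + ‖X‖ ^ 2) * ‖g‖) ^ 2 :=
        pow_le_pow_left₀ (norm_nonneg _) hgb 2
      refine le_of_sq_le_sq' (norm_nonneg _) (by positivity) ?_
      rw [mul_pow] at e1 e2 ⊢
      rw [hnorm2, hw2]
      nlinarith [sq_nonneg (‖X‖ / Real.sqrt (1 + ‖X‖ ^ 2))]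
    have hPQle : ‖P - Q‖ ≤ ‖X‖ / Real.sqrt (1 + ‖X‖ ^ 2) :=
      (P - Q).opNorm_le_bound hs0 hub
    have hslt : ‖X‖ / Real.sqrt (1 + ‖X‖ ^ 2) < 1 := by
      have h' : Real.sqrt (‖X‖ ^ 2) < Real.sqrt (1 + ‖X‖ ^ 2) :=
        Real.sqrt_lt_sqrt (by positivity) (by linarith)
      rw [Real.sqrt_sq ht0] at h'
      rwa [div_lt_one hs1]
    have hlt : ‖P - Q‖ < 1 := lt_of_le_of_lt hPQle hslt
    have hXb : ∀ x : H0, ‖X x‖ ≤ ‖P - Q‖ / Real.sqrt (1 - ‖P - Q‖ ^ 2) * ‖x‖ := by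
      intro x
      have hmem : (mk2 x (X x) : WithLp 2 (H0 × H1)) ∈ G := by
        rw [hX]; exact mem_graphSubspace_iff.mpr rfl
      have hq : Q (mk2 x (X x)) = mk2 x (X x) := hQfix _ hmem
      have hPQw : (P - Q) (mk2 x (X x)) = mk2 0 (-(X x)) := by
        rw [ContinuousLinearMap.sub_apply, hq, hPap]
        refine withlp_ext ?_ ?_
        · rw [sub_fst, mk2_fst, mk2_fst, mk2_fst, sub_self]
        · rw [sub_snd, mk2_snd, mk2_snd, mk2_snd, zero_sub]
      have h2 : ‖(mk2 x (X x) : WithLp 2 (H0 × H1))‖ =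
          Real.sqrt (‖x‖ ^ 2 + ‖X x‖ ^ 2) := by
        rw [← Real.sqrt_sq (norm_nonneg (mk2 x (X x))), norm_sq_eq, mk2_fst, mk2_snd]
      have h1 : ‖X x‖ ≤ ‖P - Q‖ * Real.sqrt (‖x‖ ^ 2 + ‖X x‖ ^ 2) := by
        calc ‖X x‖ = ‖((P - Q) (mk2 x (X x))).snd‖ := by rw [hPQw, mk2_snd, norm_neg]
        _ ≤ ‖(P - Q) (mk2 x (X x))‖ := snd_norm_le _
        _ ≤ ‖P - Q‖ * ‖(mk2 x (X x) : WithLp 2 (H0 × H1))‖ := (P - Q).le_opNorm _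
        _ = ‖P - Q‖ * Real.sqrt (‖x‖ ^ 2 + ‖X x‖ ^ 2) := by rw [h2]
      exact real_key2 (norm_nonneg _) (norm_nonneg _) hc0 hlt h1
    have hXle : ‖X‖ ≤ ‖P - Q‖ / Real.sqrt (1 - ‖P - Q‖ ^ 2) :=
      X.opNorm_le_bound (div_nonneg hc0 (Real.sqrt_nonneg _)) hXb
    obtain ⟨f1, f2⟩ := real_key3 hc0 ht0 hlt hPQle hXle
    exact ⟨hlt, f1, f2⟩
  -- invariance gives the Riccati equation
  have ric : ∀ X : H0 →L[ℂ] H1, G = graphSubspace X →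
      A1.comp X - X.comp A0 - X.comp (V.comp X) + ContinuousLinearMap.adjoint V = 0 := by
    intro X hX
    ext x
    have hmem : (mk2 x (X x) : WithLp 2 (H0 × H1)) ∈ G := by
      rw [hX]; exact mem_graphSubspace_iff.mpr rfl
    have hB1 : (B (mk2 x (X x))).snd = X ((B (mk2 x (X x))).fst) :=
      mem_graphSubspace_iff.mp (hX ▸ hGinv _ hmem)
    have hBc := hB (mk2 x (X x))
    have hfst2 : (WithLp.equiv 2 (H0 × H1) (B (mk2 x (X x)))).1 = A0 x + V (X x) := by
      rw [hBc]
      rfl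
    have hsnd2 : (WithLp.equiv 2 (H0 × H1) (B (mk2 x (X x)))).2 =
        ContinuousLinearMap.adjoint V x + A1 (X x) := by
      rw [hBc]
      rfl
    have hb1 : (B (mk2 x (X x))).fst = (WithLp.equiv 2 (H0 × H1) (B (mk2 x (X x)))).1 := rfl
    have hb2 : (B (mk2 x (X x))).snd = (WithLp.equiv 2 (H0 × H1) (B (mk2 x (X x)))).2 := rfl
    rw [hb1, hb2, hfst2, hsnd2, map_add] at hB1
    simp only [ContinuousLinearMap.add_apply, ContinuousLinearMap.sub_apply,
      ContinuousLinearMap.comp_apply, ContinuousLinearMap.zero_apply]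
    have hre : A1 (X x) - X (A0 x) - X (V (X x)) + ContinuousLinearMap.adjoint V x =
        (ContinuousLinearMap.adjoint V x + A1 (X x)) - (X (A0 x) + X (V (X x))) := by
      abel
    rw [hre, hB1, sub_self]
  -- construction of the graph operator when ‖P - Q‖ < 1
  have construct : ‖P - Q‖ < 1 → ∃ X : H0 →L[ℂ] H1, G = graphSubspace X := by
    intro hlt
    have hsndb : ∀ g ∈ G,
        ‖g.snd‖ ≤ ‖P - Q‖ / Real.sqrt (1 - ‖P - Q‖ ^ 2) * ‖g.fst‖ := by
      intro g hg
      have hq : Q g = g := hQfix g hg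
      have hPQg : (P - Q) g = mk2 0 (-g.snd) := by
        rw [ContinuousLinearMap.sub_apply, hq, hPap]
        refine withlp_ext ?_ ?_
        · rw [sub_fst, mk2_fst, mk2_fst, sub_self]
        · rw [sub_snd, mk2_snd, mk2_snd, zero_sub]
      have h2 : ‖g‖ = Real.sqrt (‖g.fst‖ ^ 2 + ‖g.snd‖ ^ 2) := by
        rw [← Real.sqrt_sq (norm_nonneg g), norm_sq_eq]
      have h1 : ‖g.snd‖ ≤ ‖P - Q‖ * Real.sqrt (‖g.fst‖ ^ 2 + ‖g.snd‖ ^ 2) := by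
        calc ‖g.snd‖ = ‖((P - Q) g).snd‖ := by rw [hPQg, mk2_snd, norm_neg]
        _ ≤ ‖(P - Q) g‖ := snd_norm_le _
        _ ≤ ‖P - Q‖ * ‖g‖ := (P - Q).le_opNorm _
        _ = _ := by rw [h2]
      exact real_key2 (norm_nonneg _) (norm_nonneg _) hc0 hlt h1
    have huniq : ∀ g ∈ G, ∀ g' ∈ G, g.fst = g'.fst → g = g' := by
      intro g hg g' hg' hf
      have hd : g - g' ∈ G := G.sub_mem hg hg'
      have h0 : (g - g').fst = 0 := by rw [sub_fst, hf, sub_self]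
      have h1 := hsndb _ hd
      rw [h0, norm_zero, mul_zero] at h1
      have h2 : (g - g').snd = 0 := norm_le_zero_iff.mp h1
      have h3 : g - g' = 0 := withlp_ext (by rw [h0]; rfl) (by rw [h2]; rfl)
      exact sub_eq_zero.mp h3
    have hsurj : ∀ x : H0, ∃ g, g ∈ G ∧ g.fst = x := by
      set Fst : WithLp 2 (H0 × H1) →L[ℂ] H0 :=
        (ContinuousLinearMap.fst ℂ H0 H1).comp
          (WithLp.prodContinuousLinearEquiv 2 ℂ H0 H1).toContinuousLinearMap with hFst
      set J0 : H0 →L[ℂ] WithLp 2 (H0 × H1) :=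
        ((WithLp.prodContinuousLinearEquiv 2 ℂ H0 H1).symm).toContinuousLinearMap.comp
          (ContinuousLinearMap.inl ℂ H0 H1) with hJ0
      have hJ0ap : ∀ x : H0, J0 x = mk2 x 0 := fun x => by rw [hJ0]; rfl
      have hFstap : ∀ u : WithLp 2 (H0 × H1), Fst u = u.fst := fun u => by rw [hFst]; rfl
      set D : H0 →L[ℂ] H0 := ContinuousLinearMap.id ℂ H0 - Fst.comp (Q.comp J0) with hD
      have hDap : ∀ x : H0, D x = x - (Q (mk2 x 0)).fst := by
        intro x
        rw [hD]
        simp only [ContinuousLinearMap.sub_apply, ContinuousLinearMap.id_apply,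
          ContinuousLinearMap.comp_apply]
        rw [hJ0ap, hFstap]
      have hDb : ‖D‖ ≤ ‖P - Q‖ := by
        refine D.opNorm_le_bound hc0 ?_
        intro x
        have hPm : P (mk2 x 0) = mk2 x 0 := by rw [hPap, mk2_fst]
        have h1 : D x = ((P - Q) (mk2 x 0)).fst := by
          rw [hDap, ContinuousLinearMap.sub_apply, sub_fst, hPm, mk2_fst]
        calc ‖D x‖ = ‖((P - Q) (mk2 x 0)).fst‖ := by rw [h1]
        _ ≤ ‖(P - Q) (mk2 x 0)‖ := fst_norm_le _
        _ ≤ ‖P - Q‖ * ‖(mk2 x 0 : WithLp 2 (H0 × H1))‖ := (P - Q).le_opNorm _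
        _ = ‖P - Q‖ * ‖x‖ := by rw [norm_mk2_left]
      have hunit : IsUnit (1 - D) :=
        isUnit_one_sub_of_norm_lt_one (lt_of_le_of_lt hDb hlt)
      intro x
      obtain ⟨u, hu⟩ := hunit
      have hmul : (1 - D) * Units.val u⁻¹ = 1 := by rw [← hu]; exact u.mul_inv
      set y := Units.val u⁻¹ x with hy
      refine ⟨Q (mk2 y 0), by rw [← hQran]; exact LinearMap.mem_range_self (Q : WithLp 2 (H0 × H1) →ₗ[ℂ] WithLp 2 (H0 × H1)) _, ?_⟩
      have h1 : (1 - D) y = (Q (mk2 y 0)).fst := by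
        have h0 : (1 - D) y = y - D y := rfl
        rw [h0, hDap, sub_sub_cancel]
      have h2 : (1 - D) y = x := by
        calc (1 - D) y = ((1 - D) * Units.val u⁻¹) x := rfl
        _ = (1 : H0 →L[ℂ] H0) x := by rw [hmul]
        _ = x := rfl
      rw [← h1, h2]
    choose gg hggG hggfst using hsurj
    have hXadd : ∀ x y : H0, gg (x + y) = gg x + gg y := by
      intro x y
      refine huniq _ (hggG _) _ (G.add_mem (hggG x) (hggG y)) ?_
      rw [hggfst, add_fst, hggfst, hggfst]
    have hXsmul : ∀ (c : ℂ) (x : H0), gg (c • x) = c • gg x := by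
      intro c x
      refine huniq _ (hggG _) _ (G.smul_mem c (hggG x)) ?_
      rw [hggfst, smul_fst, hggfst]
    set X0 : H0 →ₗ[ℂ] H1 :=
      { toFun := fun x => (gg x).snd
        map_add' := fun x y => by
          show (gg (x + y)).snd = (gg x).snd + (gg y).snd
          rw [hXadd, add_snd]
        map_smul' := fun c x => by
          show (gg (c • x)).snd = (RingHom.id ℂ) c • (gg x).snd
          rw [hXsmul, smul_snd]
          rfl } with hX0
    have hX0b : ∀ x : H0, ‖X0 x‖ ≤ ‖P - Q‖ / Real.sqrt (1 - ‖P - Q‖ ^ 2) * ‖x‖ := by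
      intro x
      have h := hsndb _ (hggG x)
      rwa [hggfst] at h
    refine ⟨X0.mkContinuous _ hX0b, ?_⟩
    ext u
    rw [mem_graphSubspace_iff]
    constructor
    · intro hu
      have h := huniq u hu (gg u.fst) (hggG _) (hggfst _).symm
      conv_lhs => rw [h]
      rfl
    · intro hu
      have h : u = gg u.fst := withlp_ext (hggfst _).symm hu
      rw [h]
      exact hggG _
  constructor
  · constructor
    · intro hlt
      obtain ⟨X, hXG⟩ := construct hlt
      exact ⟨X, ric X hXG, hXG⟩
    · rintro ⟨X, -, hXG⟩
      exact (key X hXG).1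
  · intro X _ hXG
    exact (key X hXG).2

end
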